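/- Let Q be a bounded quasinilpotent operator on a complex Banach space X. Suppose M := sup_{Re s ≥ 0} ‖(I − szQ)^{-1}‖ < ∞ for some z with zQ ≠ 0, and set α := 1/(2M‖zQ‖). Then ‖(I − szQ)^{-1}‖ ≤ 2M for all s ∈ ℂ with Re s > −α. -/

import Mathlib

theorem resolvent_bound_extends_left
    {X : Type*} [NormedAddCommGroup X] [NormedSpace ℂ X] [CompleteSpace X]
    (Q : X →L[ℂ] X) (hQ : spectrum ℂ Q = {0}) (z : ℂ) (M : ℝ)
    (hzQ : z • Q ≠ 0)
    (hM : ∀ s : ℂ, 0 ≤ s.re → ‖Ring.inverse (1 - (s * z) • Q)‖ ≤ M) :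
    ∀ s : ℂ, -(1 / (2 * M * ‖z • Q‖)) < s.re →
      ‖Ring.inverse (1 - (s * z) • Q)‖ ≤ 2 * M := by
  -- X is nontrivial
  have hX : Nontrivial X := by
    by_contra h
    rw [not_nontrivial_iff_subsingleton] at h
    exact hzQ (by ext x; exact Subsingleton.elim _ _)
  -- spectral radius of Q is 0, hence all 1 - w • Q are units
  have hrad : spectralRadius ℂ Q = 0 := by
    simp [spectralRadius, hQ]
  have hunit : ∀ w : ℂ, IsUnit ((1 : X →L[ℂ] X) - w • Q) := fun w =>
    spectrum.isUnit_one_sub_smul_of_lt_inv_radius (by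
      rw [hrad, ENNReal.inv_zero]; exact ENNReal.coe_lt_top)
  -- M ≥ 1
  have hM1 : (1 : ℝ) ≤ M := by
    have := hM 0 le_rfl
    simpa using this
  have hMpos : (0 : ℝ) < M := lt_of_lt_of_le one_pos hM1
  have hzQpos : (0 : ℝ) < ‖z • Q‖ := norm_pos_iff.mpr hzQ
  intro s hs
  by_cases hre : 0 ≤ s.re
  · exact (hM s hre).trans (by nlinarith)
  push_neg at hre
  -- the purely imaginary point
  set t : ℂ := (s.im : ℂ) * Complex.I with ht
  have htre : t.re = 0 := by simp [ht]
  have hst : s - t = (s.re : ℂ) := by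
    apply Complex.ext <;> simp [ht]
  set A : X →L[ℂ] X := 1 - (t * z) • Q with hA
  have hAunit : IsUnit A := hunit (t * z)
  have hMA : ‖Ring.inverse A‖ ≤ M := hM t (le_of_eq htre.symm)
  set B : X →L[ℂ] X := Ring.inverse A * (((s.re : ℂ) * z) • Q) with hB
  have hsre_lt : |s.re| < 1 / (2 * M * ‖z • Q‖) := by
    rw [abs_of_neg hre]; linarith
  have hBnorm : ‖B‖ < 1 / 2 := by
    have h1 : ‖(((s.re : ℂ) * z) • Q)‖ = |s.re| * ‖z • Q‖ := by
      rw [mul_smul, norm_smul ((s.re : ℂ)) (z • Q), Complex.norm_real, Real.norm_eq_abs]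
    calc ‖B‖ ≤ ‖Ring.inverse A‖ * ‖(((s.re : ℂ) * z) • Q)‖ := norm_mul_le _ _
      _ = ‖Ring.inverse A‖ * (|s.re| * ‖z • Q‖) := by rw [h1]
      _ ≤ M * (|s.re| * ‖z • Q‖) := by
          apply mul_le_mul_of_nonneg_right hMA (by positivity)
      _ < M * ((1 / (2 * M * ‖z • Q‖)) * ‖z • Q‖) := by
          apply mul_lt_mul_of_pos_left _ hMpos
          exact mul_lt_mul_of_pos_right hsre_lt hzQpos
      _ = 1 / 2 := by field_simp
  have hBlt1 : ‖B‖ < 1 := hBnorm.trans (by norm_num)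
  -- factorization
  have hfac : (1 : X →L[ℂ] X) - (s * z) • Q = A * (1 - B) := by
    rw [mul_sub, mul_one, hB, ← mul_assoc, Ring.mul_inverse_cancel A hAunit, one_mul, hA]
    rw [sub_sub, ← add_smul, ← add_mul]
    congr 2
    rw [← hst]; ring
  set uA : (X →L[ℂ] X)ˣ := hAunit.unit with huA
  set uB : (X →L[ℂ] X)ˣ := Units.oneSub B hBlt1 with huB
  have hval : (1 : X →L[ℂ] X) - (s * z) • Q = ↑(uA * uB) := by
    rw [Units.val_mul, huA, IsUnit.unit_spec, huB, Units.val_oneSub, hfac]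
  rw [hval, Ring.inverse_unit, mul_inv_rev, Units.val_mul]
  have hinvB : (↑uB⁻¹ : X →L[ℂ] X) = ∑' n : ℕ, B ^ n := rfl
  have hinvBnorm : ‖(↑uB⁻¹ : X →L[ℂ] X)‖ ≤ 2 := by
    rw [hinvB]
    refine (tsum_geometric_le_of_norm_lt_one B hBlt1).trans ?_
    have : (1 - ‖B‖)⁻¹ ≤ 2 := by
      rw [← inv_inv (2 : ℝ)]
      apply inv_anti₀ (by norm_num)
      linarith
    have h1 : ‖(1 : X →L[ℂ] X)‖ = 1 := norm_one
    linarith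
  have hinvA : (↑uA⁻¹ : X →L[ℂ] X) = Ring.inverse A := by
    rw [huA, ← Ring.inverse_unit, IsUnit.unit_spec]
  calc ‖(↑uB⁻¹ : X →L[ℂ] X) * ↑uA⁻¹‖ ≤ ‖(↑uB⁻¹ : X →L[ℂ] X)‖ * ‖(↑uA⁻¹ : X →L[ℂ] X)‖ :=
        norm_mul_le _ _
    _ ≤ 2 * M := by
        rw [hinvA]
        exact mul_le_mul hinvBnorm hMA (norm_nonneg _) (by norm_num)
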